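/- Let L, N ≥ 0, let T̄ ∈ (0,∞], suppose u = f + η with f ∈ F_L and η ∈ E_N, and fix t > 0. Define Q(t, T, σ) = u(t − σ) − u(t) + ((u(t) − u(t − T))/T)·σ and the noise estimate N̂(t) = (1/2)·sup over T ∈ (0, T̄] with T ≤ t and σ ∈ [0, T] of (|Q(t, T, σ)| − L·σ·(T − σ)/2). For t₀ ∈ [0, t), define the right-sided discontinuity D(t₀) = limsup as τ → t₀⁺ of |η(τ) − η(t₀)|. Then for every t₀ ∈ [0, t) with t₀ ≥ t − T̄, the inequalities D(t₀)/2 ≤ N̂(t) ≤ N hold. -/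

import Mathlib

open Set Filter Topology

/-- `f ∈ F_L`: `f : [0,∞) → ℝ` is differentiable with derivative `f'`
that is Lipschitz continuous with constant `L` on `[0,∞)`. -/
def IsFL (L : ℝ) (f f' : ℝ → ℝ) : Prop :=
  (∀ t ∈ Set.Ici (0:ℝ), HasDerivWithinAt f (f' t) (Set.Ici 0) t) ∧
  ∀ s ∈ Set.Ici (0:ℝ), ∀ t ∈ Set.Ici (0:ℝ), |f' s - f' t| ≤ L * |s - t|

/-- `η ∈ E_N`: measurable noise bounded by `N` on `[0,∞)`. -/
def IsEN (N : ℝ) (η : ℝ → ℝ) : Prop :=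
  Measurable η ∧ ∀ t ∈ Set.Ici (0:ℝ), |η t| ≤ N

/-- `f ∈ F_L^R`: member of `F_L` with `|f(0)| ≤ R` and `|ḟ(0)| ≤ R`. -/
def IsFLR (L R : ℝ) (f f' : ℝ → ℝ) : Prop :=
  IsFL L f f' ∧ |f 0| ≤ R ∧ |f' 0| ≤ R

/-- A differentiator is causal if its output at time `T` depends only on the
input on `[0, T]`. -/
def Causal (D : (ℝ → ℝ) → ℝ → ℝ) : Prop :=
  ∀ u₁ u₂ T, (∀ t ∈ Set.Icc (0:ℝ) T, u₁ t = u₂ t) → D u₁ T = D u₂ T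


lemma aux_quad {L p q : ℝ} (hpq : p ≤ q) {F F' : ℝ → ℝ}
    (hcont : ContinuousOn F (Icc p q))
    (hderiv : ∀ y ∈ Ico p q, HasDerivWithinAt F (F' y) (Ici y) y)
    (h0 : F p = 0) (hb : ∀ y ∈ Ico p q, |F' y| ≤ L * (y - p)) :
    |F q| ≤ L * (q - p)^2 / 2 := by
  have hB : ∀ y : ℝ, HasDerivAt (fun y => L * (y - p)^2 / 2) (L * (y - p)) y := by
    intro y
    have : HasDerivAt (fun y : ℝ => L * (y - p)^2 / 2) (L * (2 * (y - p)^(2-1) * 1) / 2) y :=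
      (((hasDerivAt_id y).sub_const p).pow 2).const_mul L |>.div_const 2
    simpa using this.congr_deriv (by ring)
  have := image_norm_le_of_norm_deriv_right_le_deriv_boundary hcont hderiv
    (B := fun y => L * (y - p)^2 / 2) (B' := fun y => L * (y - p))
    (by simp [h0]) hB (by simpa using hb)
  simpa using this (right_mem_Icc.2 hpq)

lemma fcont {L : ℝ} {f f' : ℝ → ℝ} (hf : IsFL L f f') : ContinuousOn f (Ici 0) :=
  fun x hx => (hf.1 x hx).continuousWithinAt

lemma aux_taylor {L : ℝ} {f f' : ℝ → ℝ} (hf : IsFL L f f') {c x : ℝ}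
    (hc : 0 ≤ c) (hx : 0 ≤ x) :
    |f x - f c - f' c * (x - c)| ≤ L * (x - c)^2 / 2 := by
  rcases le_or_gt c x with hcx | hxc
  · have key : |(fun y => f y - f c - f' c * (y - c)) x| ≤ L * (x - c)^2 / 2 := by
      refine aux_quad hcx (F := fun y => f y - f c - f' c * (y - c))
        (F' := fun y => f' y - f' c) ?_ ?_ (by simp) ?_
      · apply ContinuousOn.sub
        · exact ContinuousOn.sub ((fcont hf).mono (fun y hy => le_trans hc hy.1))
            continuousOn_const
        · fun_prop
      · intro y hy
        have hy0 : (0:ℝ) ≤ y := le_trans hc hy.1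
        have h1 : HasDerivWithinAt f (f' y) (Ici y) y :=
          (hf.1 y hy0).mono (fun z hz => le_trans hy0 hz)
        have h2 : HasDerivWithinAt (fun y => f' c * (y - c)) (f' c) (Ici y) y := by
          have : HasDerivAt (fun y : ℝ => f' c * (y - c)) (f' c * 1) y :=
            ((hasDerivAt_id y).sub_const c).const_mul (f' c)
          simpa using this.hasDerivWithinAt
        exact (h1.sub_const (f c)).sub h2
      · intro y hy
        have := hf.2 y (le_trans hc hy.1) c hc
        rwa [abs_of_nonneg (by linarith [hy.1] : (0:ℝ) ≤ y - c)] at this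
    simpa using key
  · have key : |(fun y => f (c + x - y) - f c - f' c * ((c + x - y) - c)) c|
        ≤ L * (c - x)^2 / 2 := by
      refine aux_quad hxc.le (F := fun y => f (c + x - y) - f c - f' c * ((c + x - y) - c))
        (F' := fun y => -(f' (c + x - y)) + f' c) ?_ ?_ (by simp) ?_
      · apply ContinuousOn.sub
        · refine ContinuousOn.sub ((fcont hf).comp (by fun_prop) ?_) continuousOn_const
          intro y hy
          simp only [mem_Ici]
          linarith [hy.2]
        · exact Continuous.continuousOn (by fun_prop)
      · intro y hy
        have hz : 0 < c + x - y := by rcases hy with ⟨h1, h2⟩; linarith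
        have hfz : HasDerivAt f (f' (c + x - y)) (c + x - y) :=
          (hf.1 _ hz.le).hasDerivAt (Ici_mem_nhds hz)
        have hin : HasDerivAt (fun y : ℝ => c + x - y) (-1) y := by
          exact ((hasDerivAt_const y (c + x)).sub (hasDerivAt_id y)).congr_deriv (by simp)
        have h1 : HasDerivAt (fun y => f (c + x - y)) (f' (c + x - y) * (-1)) y :=
          HasDerivAt.comp y hfz hin
        have h2 : HasDerivAt (fun y => f' c * ((c + x - y) - c)) (f' c * (-1)) y := by
          simpa using (hin.sub_const c).const_mul (f' c)
        exact (((h1.sub_const (f c)).sub h2).congr_deriv (by ring)).hasDerivWithinAt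
      · intro y hy
        have hz : 0 < c + x - y := by rcases hy with ⟨h1, h2⟩; linarith
        have := hf.2 (c + x - y) hz.le c hc
        have habs : |c + x - y - c| = y - x := by
          rw [abs_of_nonpos (by linarith [hy.1])]; ring
        calc |-(f' (c + x - y)) + f' c| = |f' (c + x - y) - f' c| := by
              rw [← abs_neg]; ring_nf
          _ ≤ L * (y - x) := by rwa [habs] at this
    have h2 : |f x - f c - f' c * (x - c)| ≤ L * (c - x)^2 / 2 := by simpa using key
    calc |f x - f c - f' c * (x - c)| ≤ L * (c - x)^2 / 2 := h2
      _ = L * (x - c)^2 / 2 := by ring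

lemma aux_interp {L : ℝ} {f f' : ℝ → ℝ} (hf : IsFL L f f') (hL : 0 ≤ L) {a b x : ℝ}
    (ha : 0 ≤ a) (hab : a < b) (hax : a ≤ x) (hxb : x ≤ b) :
    |f x - f b + ((f b - f a) / (b - a)) * (b - x)| ≤ L * (b - x) * (x - a) / 2 := by
  have hx0 : 0 ≤ x := le_trans ha hax
  have hb0 : 0 ≤ b := le_trans hx0 hxb
  set ra := f a - f x - f' x * (a - x) with hra
  set rb := f b - f x - f' x * (b - x) with hrb
  have hraB : |ra| ≤ L * (a - x)^2 / 2 := aux_taylor hf hx0 ha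
  have hrbB : |rb| ≤ L * (b - x)^2 / 2 := aux_taylor hf hx0 hb0
  have hba : (0:ℝ) < b - a := by linarith
  have hid : f x - f b + ((f b - f a) / (b - a)) * (b - x)
      = (-(x - a) * rb - (b - x) * ra) / (b - a) := by
    rw [hra, hrb]
    field_simp
    ring
  rw [hid, abs_div, abs_of_pos hba]
  rw [div_le_iff₀ hba]
  have htri : |(-(x - a) * rb - (b - x) * ra)| ≤ (x - a) * |rb| + (b - x) * |ra| := by
    calc |(-(x - a) * rb - (b - x) * ra)| ≤ |(-(x - a) * rb)| + |(b - x) * ra| :=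
          abs_sub _ _
      _ = (x - a) * |rb| + (b - x) * |ra| := by
          rw [abs_mul, abs_mul, abs_neg, abs_of_nonneg (by linarith : (0:ℝ) ≤ x - a),
            abs_of_nonneg (by linarith : (0:ℝ) ≤ b - x)]
  have h1 : (x - a) * |rb| + (b - x) * |ra|
      ≤ (x - a) * (L * (b - x)^2 / 2) + (b - x) * (L * (a - x)^2 / 2) := by
    gcongr <;> linarith
  have h2 : (x - a) * (L * (b - x)^2 / 2) + (b - x) * (L * (a - x)^2 / 2)
      = L * (b - x) * (x - a) / 2 * (b - a) := by ring
  linarith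

theorem stmt11 (L N : ℝ) (hL : 0 ≤ L) (hN : 0 ≤ N)
    (Tbar : EReal) (hTbar : 0 < Tbar)
    (f f' η u : ℝ → ℝ) (hf : IsFL L f f') (hη : IsEN N η) (hu : u = f + η)
    (t : ℝ) (ht : 0 < t)
    (Q : ℝ → ℝ → ℝ)
    (hQ : ∀ T σ : ℝ, Q T σ = u (t - σ) - u t + ((u t - u (t - T)) / T) * σ)
    (Nhat : ℝ)
    (hNhat : Nhat = (1/2) * sSup { v : ℝ | ∃ T σ : ℝ, 0 < T ∧ (T : EReal) ≤ Tbar ∧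
        T ≤ t ∧ 0 ≤ σ ∧ σ ≤ T ∧ v = |Q T σ| - L * σ * (T - σ) / 2 })
    (t₀ : ℝ) (ht₀0 : 0 ≤ t₀) (ht₀t : t₀ < t) (ht₀T : (t : EReal) - Tbar ≤ (t₀ : EReal)) :
    Filter.limsup (fun τ => |η τ - η t₀|) (𝓝[>] t₀) / 2 ≤ Nhat ∧ Nhat ≤ N := by
  set S := { v : ℝ | ∃ T σ : ℝ, 0 < T ∧ (T : EReal) ≤ Tbar ∧
        T ≤ t ∧ 0 ≤ σ ∧ σ ≤ T ∧ v = |Q T σ| - L * σ * (T - σ) / 2 } with hS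
  -- every element of S is at most 2 * N
  have hub : ∀ v ∈ S, v ≤ 2 * N := by
    rintro v ⟨T, σ, hT, hTb, hTt, hσ0, hσT, hv⟩
    have htT0 : 0 ≤ t - T := by linarith
    have htσ0 : 0 ≤ t - σ := by linarith
    -- f part
    have hQf : |f (t - σ) - f t + ((f t - f (t - T)) / T) * σ| ≤ L * σ * (T - σ) / 2 := by
      have H := aux_interp hf hL (a := t - T) (b := t) (x := t - σ) htT0
        (by linarith) (by linarith) (by linarith)
      rw [show t - (t - T) = T from by ring, show t - (t - σ) = σ from by ring,
        show (t - σ) - (t - T) = T - σ from by ring] at H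
      exact H
    -- η part
    have hb1 : |η (t - σ)| ≤ N := hη.2 _ htσ0
    have hb2 : |η t| ≤ N := hη.2 _ ht.le
    have hb3 : |η (t - T)| ≤ N := hη.2 _ htT0
    have hs0 : 0 ≤ σ / T := div_nonneg hσ0 hT.le
    have hs1 : σ / T ≤ 1 := (div_le_one hT).2 hσT
    have hQη : |η (t - σ) - η t + ((η t - η (t - T)) / T) * σ| ≤ 2 * N := by
      have hid : η (t - σ) - η t + ((η t - η (t - T)) / T) * σ
          = η (t - σ) - (1 - σ / T) * η t - (σ / T) * η (t - T) := by
        field_simp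
        ring
      rw [hid]
      have htri : |η (t - σ) - (1 - σ / T) * η t - (σ / T) * η (t - T)|
          ≤ |η (t - σ)| + |(1 - σ / T) * η t| + |(σ / T) * η (t - T)| := by
        calc |η (t - σ) - (1 - σ / T) * η t - (σ / T) * η (t - T)|
            ≤ |η (t - σ) - (1 - σ / T) * η t| + |(σ / T) * η (t - T)| := abs_sub _ _
          _ ≤ |η (t - σ)| + |(1 - σ / T) * η t| + |(σ / T) * η (t - T)| := by
              have := abs_sub (η (t - σ)) ((1 - σ / T) * η t)
              linarith
      rw [abs_mul, abs_mul, abs_of_nonneg (by linarith : (0:ℝ) ≤ 1 - σ / T),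
        abs_of_nonneg hs0] at htri
      nlinarith [abs_nonneg (η t), abs_nonneg (η (t - T))]
    -- combine
    have hQsum : Q T σ = (f (t - σ) - f t + ((f t - f (t - T)) / T) * σ)
        + (η (t - σ) - η t + ((η t - η (t - T)) / T) * σ) := by
      rw [hQ, hu]
      simp only [Pi.add_apply]
      field_simp
      ring
    have : |Q T σ| ≤ L * σ * (T - σ) / 2 + 2 * N := by
      rw [hQsum]
      calc |_ + _| ≤ _ + _ := abs_add_le _ _
        _ ≤ L * σ * (T - σ) / 2 + 2 * N := add_le_add hQf hQη
    rw [hv]; linarith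
  have hbdd : BddAbove S := ⟨2 * N, fun v hv => hub v hv⟩
  have hsup : sSup S ≤ 2 * N := Real.sSup_le hub (by linarith)
  refine ⟨?_, by rw [hNhat]; linarith⟩
  -- lower bound
  set T := t - t₀ with hTdef
  have hT0 : 0 < T := by simp only [hTdef]; linarith
  have hTt : T ≤ t := by simp only [hTdef]; linarith
  have hTb : (T : EReal) ≤ Tbar := by
    induction Tbar with
    | bot => exact absurd hTbar (by simp)
    | coe c =>
        have : (t - c : ℝ) ≤ t₀ := by
          rw [show ((t : EReal) - (c : EReal)) = ((t - c : ℝ) : EReal) from by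
            rw [EReal.coe_sub]] at ht₀T
          exact_mod_cast ht₀T
        exact_mod_cast (by linarith : T ≤ c)
    | top => exact le_top
  -- key pointwise bound
  have hkey : ∀ τ ∈ Ioo t₀ t, |η τ - η t₀|
      ≤ sSup S + L * (t - τ) * (τ - t₀) / 2 + |u t - u t₀| / T * (τ - t₀)
        + |f τ - f t₀| := by
    intro τ hτ
    have hmem : |Q T (t - τ)| - L * (t - τ) * (T - (t - τ)) / 2 ∈ S :=
      ⟨T, t - τ, hT0, hTb, hTt, by linarith [hτ.2], by simp only [hTdef]; linarith [hτ.1],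
        rfl⟩
    have hle : |Q T (t - τ)| - L * (t - τ) * (T - (t - τ)) / 2 ≤ sSup S :=
      le_csSup hbdd hmem
    have hQτ : |Q T (t - τ)| ≤ sSup S + L * (t - τ) * (τ - t₀) / 2 := by
      have : T - (t - τ) = τ - t₀ := by simp only [hTdef]; ring
      rw [this] at hle; linarith
    have hid : η τ - η t₀ = Q T (t - τ) + (u t - u t₀) * ((τ - t₀) / T)
        - (f τ - f t₀) := by
      rw [hQ, hu, show t - (t - τ) = τ from by ring, show t - T = t₀ from by
        simp only [hTdef]; ring]
      simp only [Pi.add_apply]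
      field_simp
      ring
    have habs2 : |(u t - u t₀) * ((τ - t₀) / T)| = |u t - u t₀| / T * (τ - t₀) := by
      rw [abs_mul, abs_of_nonneg (div_nonneg (by linarith [hτ.1]) hT0.le)]
      ring
    calc |η τ - η t₀| ≤ |Q T (t - τ)| + |(u t - u t₀) * ((τ - t₀) / T)|
          + |f τ - f t₀| := by
          rw [hid]
          have h1 := abs_add_le (Q T (t - τ)) ((u t - u t₀) * ((τ - t₀) / T))
          have h2 := abs_sub (Q T (t - τ) + (u t - u t₀) * ((τ - t₀) / T)) (f τ - f t₀)
          linarith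
      _ ≤ sSup S + L * (t - τ) * (τ - t₀) / 2 + |u t - u t₀| / T * (τ - t₀)
          + |f τ - f t₀| := by rw [habs2]; linarith
  -- limsup bound
  have hsub : Ioi t₀ ⊆ Ici (0:ℝ) := fun x hx => le_of_lt (lt_of_le_of_lt ht₀0 hx)
  have hft : Tendsto f (𝓝[>] t₀) (𝓝 (f t₀)) :=
    ((hf.1 t₀ ht₀0).continuousWithinAt).mono_left (nhdsWithin_mono t₀ hsub)
  set φ : ℝ → ℝ := fun τ => sSup S + L * (t - τ) * (τ - t₀) / 2
      + |u t - u t₀| / T * (τ - t₀) + |f τ - f t₀| with hφdef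
  have hφtend : Tendsto φ (𝓝[>] t₀) (𝓝 (sSup S)) := by
    have h1 : Tendsto (fun τ : ℝ => L * (t - τ) * (τ - t₀) / 2) (𝓝[>] t₀) (𝓝 0) := by
      have hc : Continuous (fun τ : ℝ => L * (t - τ) * (τ - t₀) / 2) := by fun_prop
      have := hc.tendsto t₀
      simp only [sub_self, mul_zero, zero_div] at this
      exact this.mono_left nhdsWithin_le_nhds
    have h2 : Tendsto (fun τ : ℝ => |u t - u t₀| / T * (τ - t₀)) (𝓝[>] t₀) (𝓝 0) := by
      have hc : Continuous (fun τ : ℝ => |u t - u t₀| / T * (τ - t₀)) := by fun_prop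
      have := hc.tendsto t₀
      simp only [sub_self, mul_zero] at this
      exact this.mono_left nhdsWithin_le_nhds
    have h3 : Tendsto (fun τ : ℝ => |f τ - f t₀|) (𝓝[>] t₀) (𝓝 0) := by
      have := (hft.sub_const (f t₀)).abs
      simpa using this
    have := ((tendsto_const_nhds (x := sSup S) (f := 𝓝[>] t₀)).add h1).add h2 |>.add h3
    simpa using this
  have hev : ∀ᶠ τ in 𝓝[>] t₀, |η τ - η t₀| ≤ φ τ := by
    filter_upwards [Ioo_mem_nhdsGT_of_mem (by constructor <;> [rfl; exact ht₀t] :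
      t₀ ∈ Ico t₀ t)] with τ hτ
    exact hkey τ hτ
  have hcob : IsCoboundedUnder (· ≤ ·) (𝓝[>] t₀) (fun τ => |η τ - η t₀|) := by
    have hbd : IsBoundedUnder (· ≥ ·) (𝓝[>] t₀) (fun τ => |η τ - η t₀|) :=
      isBoundedUnder_of ⟨0, fun x => abs_nonneg _⟩
    exact hbd.isCoboundedUnder_le
  have hls : limsup (fun τ => |η τ - η t₀|) (𝓝[>] t₀) ≤ sSup S := by
    calc limsup (fun τ => |η τ - η t₀|) (𝓝[>] t₀) ≤ limsup φ (𝓝[>] t₀) :=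
          limsup_le_limsup hev hcob hφtend.isBoundedUnder_le
      _ = sSup S := hφtend.limsup_eq
  rw [hNhat]
  linarith
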